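/- For the classifier κ(x₁,x₂,x₃,x₄) = x₁ ∧ (x₂ ∨ (x₃ ∧ x₄)) with v = (1,1,1,1), the Responsibility score over AXps gives Sc_R(1) = Sc_R(2) = 1/2, but the dual Responsibility score over CXps gives Sc_R^d(1) = 1 and Sc_R^d(2) = 1/2; hence the Responsibility score fails weak duality. -/

import Mathlib

open Finset

/-- `S` is a weak abductive explanation (WAXp). -/
def WAXp {m : ℕ} {K : Type*} {D : Fin m → Type*} (κ : (∀ i, D i) → K) (v : ∀ i, D i)
    (S : Finset (Fin m)) : Prop :=
  ∀ x : ∀ i, D i, (∀ i ∈ S, x i = v i) → κ x = κ v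

/-- `S` is a weak contrastive explanation (WCXp). -/
def WCXp {m : ℕ} {K : Type*} {D : Fin m → Type*} (κ : (∀ i, D i) → K) (v : ∀ i, D i)
    (S : Finset (Fin m)) : Prop :=
  ∃ x : ∀ i, D i, (∀ i ∉ S, x i = v i) ∧ κ x ≠ κ v

/-- An AXp is a subset-minimal WAXp. -/
def AXp {m : ℕ} {K : Type*} {D : Fin m → Type*} (κ : (∀ i, D i) → K) (v : ∀ i, D i)
    (S : Finset (Fin m)) : Prop :=
  WAXp κ v S ∧ ∀ T ⊂ S, ¬ WAXp κ v T

/-- A CXp is a subset-minimal WCXp. -/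
def CXp {m : ℕ} {K : Type*} {D : Fin m → Type*} (κ : (∀ i, D i) → K) (v : ∀ i, D i)
    (S : Finset (Fin m)) : Prop :=
  WCXp κ v S ∧ ∀ T ⊂ S, ¬ WCXp κ v T

/-- The classifier `κ(x₁,x₂,x₃,x₄) = x₁ ∧ (x₂ ∨ (x₃ ∧ x₄))` (features are
`0`-indexed). -/
def kappa4 (x : Fin 4 → Bool) : Bool :=
  x 0 && (x 1 || (x 2 && x 3))

/-- The instance `v = (1,1,1,1)`. -/
def v4 : Fin 4 → Bool := fun _ => true

open Classical in
/-- The set of all AXps. -/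
noncomputable def AXps {m : ℕ} {K : Type*} {D : Fin m → Type*} (κ : (∀ i, D i) → K)
    (v : ∀ i, D i) : Finset (Finset (Fin m)) :=
  univ.powerset.filter (AXp κ v)

open Classical in
/-- The set of all CXps. -/
noncomputable def CXps {m : ℕ} {K : Type*} {D : Fin m → Type*} (κ : (∀ i, D i) → K)
    (v : ∀ i, D i) : Finset (Finset (Fin m)) :=
  univ.powerset.filter (CXp κ v)

open Classical in
/-- The Responsibility score of feature `i` for a family `𝒳` of sets of
features: `max{1/|S| : S ∈ 𝒳, i ∈ S}` (`0` if no such set exists). -/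
noncomputable def respScore {m : ℕ} (𝒳 : Finset (Finset (Fin m))) (i : Fin m) : ℚ :=
  (((𝒳.filter (fun S => i ∈ S)).image (fun S => 1 / (S.card : ℚ))).max).getD 0

theorem stmt18 :
    respScore (AXps kappa4 v4) 0 = 1 / 2 ∧ respScore (AXps kappa4 v4) 1 = 1 / 2 ∧
      respScore (CXps kappa4 v4) 0 = 1 ∧ respScore (CXps kappa4 v4) 1 = 1 / 2 := by
  have hA : AXps kappa4 v4 = {({0,1} : Finset (Fin 4)), {0,2,3}} := by
    ext S
    simp only [AXps, mem_filter, mem_powerset, subset_univ, true_and]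
    constructor
    · intro h; revert h; revert S; simp only [AXp, WAXp]; decide
    · intro h; revert h; revert S; simp only [AXp, WAXp]; decide
  have hC : CXps kappa4 v4 = {({0} : Finset (Fin 4)), {1,2}, {1,3}} := by
    ext S
    simp only [CXps, mem_filter, mem_powerset, subset_univ, true_and]
    constructor
    · intro h; revert h; revert S; simp only [CXp, WCXp]; decide
    · intro h; revert h; revert S; simp only [CXp, WCXp]; decide
  refine ⟨?_, ?_, ?_, ?_⟩ <;>
    simp only [respScore, hA, hC] <;>
    norm_num [Finset.filter_insert, Finset.filter_singleton, Finset.image_insert,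
      Finset.image_singleton, Finset.max_insert, Finset.max_singleton,
      (by decide : ¬((1:Fin 4)=2 ∨ (1:Fin 4)=3)), (by decide : ¬((0:Fin 4)=2)),
      (by decide : ¬((0:Fin 4)=3)),
      (by decide : #({0,2,3} : Finset (Fin 4)) = 3),
      (by decide : #({1,2} : Finset (Fin 4)) = 2),
      (by decide : #({1,3} : Finset (Fin 4)) = 2),
      ← WithBot.coe_sup] <;>
    norm_num <;> rfl
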